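/- arXiv:1704.05553 — 2 statements merged into one kernel-verified Lean document; each statement's English description precedes it below -/
import Mathlib

section
/- Let m, n ≥ 1, let O ⊆ ℝᵐ be open, and let u : ℝᵐ → ℂⁿ be three times continuously differentiable on O with invertible Gram matrix g(t) (entries g_{ij}(t) = ⟨∂_i u(t), ∂_j u(t)⟩) at every t ∈ O; write s = √(det g), g^{ij} for the entries of g⁻¹, and H := Δ_g u := s⁻¹ Σ_{i,j} ∂_j( s · g^{ij} · ∂_i u ). Let θ : O → ℝ be continuously differentiable and satisfy ∂_i θ(t) = ⟨J H(t), ∂_i u(t)⟩ for all t ∈ O and all i. If the Hamiltonian stationary condition Σ_{i,j} g^{ij} ⟨∂_j (J H), ∂_i u⟩ = 0 holds on O, then θ is harmonic with respect to g: Σ_{i,j} ∂_j( s · g^{ij} · ∂_i θ ) = 0 on O. -/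
/-- The standard complex structure `J x = i • x` on `ℂⁿ`. -/
noncomputable def Jc {n : ℕ} (x : EuclideanSpace ℂ (Fin n)) : EuclideanSpace ℂ (Fin n) :=
  Complex.I • x

/-- The real inner product `⟨x, y⟩ = Re ⟪x, y⟫` on `ℂⁿ`. -/
noncomputable def rinner {n : ℕ} (x y : EuclideanSpace ℂ (Fin n)) : ℝ :=
  (inner ℂ x y : ℂ).re

/-- Partial derivative in the `k`-th coordinate direction of a map on `ℝᵐ`. -/
noncomputable def pd {m : ℕ} {E : Type*} [NormedAddCommGroup E] [NormedSpace ℝ E]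
    (k : Fin m) (f : EuclideanSpace ℝ (Fin m) → E) (t : EuclideanSpace ℝ (Fin m)) : E :=
  fderiv ℝ f t (EuclideanSpace.single k 1)

/-- The Gram matrix `g_{ij} = ⟨∂_i u, ∂_j u⟩` of an immersion `u : ℝᵐ → ℂⁿ`. -/
noncomputable def gram {m n : ℕ} (u : EuclideanSpace ℝ (Fin m) → EuclideanSpace ℂ (Fin n))
    (t : EuclideanSpace ℝ (Fin m)) : Matrix (Fin m) (Fin m) ℝ :=
  fun i j => rinner (pd i u t) (pd j u t)

variable {m n : ℕ}

lemma rinner_smul_right (x y : EuclideanSpace ℂ (Fin n)) (c : ℝ) :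
    rinner x (c • y) = c * rinner x y := by
  rw [rinner, RCLike.real_smul_eq_coe_smul (K := ℂ) c, inner_smul_right]
  simp [rinner]

lemma rinner_smul_left (x y : EuclideanSpace ℂ (Fin n)) (c : ℝ) :
    rinner (c • x) y = c * rinner x y := by
  rw [rinner, RCLike.real_smul_eq_coe_smul (K := ℂ) c, inner_smul_left]
  simp [rinner]

lemma rinner_sum_right {ι : Type*} (s : Finset ι) (x : EuclideanSpace ℂ (Fin n))
    (f : ι → EuclideanSpace ℂ (Fin n)) :
    rinner x (∑ i ∈ s, f i) = ∑ i ∈ s, rinner x (f i) := by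
  simp [rinner, inner_sum]

lemma rinner_sum_left {ι : Type*} (s : Finset ι) (x : EuclideanSpace ℂ (Fin n))
    (f : ι → EuclideanSpace ℂ (Fin n)) :
    rinner (∑ i ∈ s, f i) x = ∑ i ∈ s, rinner (f i) x := by
  simp [rinner, sum_inner]

lemma rinner_comm (x y : EuclideanSpace ℂ (Fin n)) : rinner x y = rinner y x := by
  rw [rinner, rinner, ← inner_conj_symm x y, Complex.conj_re]

lemma rinner_J_self (x : EuclideanSpace ℂ (Fin n)) : rinner (Jc x) x = 0 := by
  rw [rinner, Jc, inner_smul_left]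
  simp [Complex.mul_re]
  exact_mod_cast Complex.ofReal_im (‖x‖ ^ 2)

lemma pd_congr_nhds {E : Type*} [NormedAddCommGroup E] [NormedSpace ℝ E]
    {f g : EuclideanSpace ℝ (Fin m) → E} {t : EuclideanSpace ℝ (Fin m)} (k : Fin m)
    (h : f =ᶠ[nhds t] g) : pd k f t = pd k g t := by
  unfold pd; rw [Filter.EventuallyEq.fderiv_eq h]

lemma pd_rinner {f g : EuclideanSpace ℝ (Fin m) → EuclideanSpace ℂ (Fin n)}
    {t : EuclideanSpace ℝ (Fin m)} (k : Fin m)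
    (hf : DifferentiableAt ℝ f t) (hg : DifferentiableAt ℝ g t) :
    pd k (fun t => rinner (f t) (g t)) t
      = rinner (pd k f t) (g t) + rinner (f t) (pd k g t) := by
  have h1 := (hf.hasFDerivAt.inner ℂ hg.hasFDerivAt)
  have h2 := (Complex.reCLM.hasFDerivAt (x := (inner ℂ (f t) (g t) : ℂ))).comp t h1
  show fderiv ℝ (fun t => rinner (f t) (g t)) t _ = _
  have : (fun t => rinner (f t) (g t))
      = ⇑Complex.reCLM ∘ fun t => (inner ℂ (f t) (g t) : ℂ) := rfl
  rw [this, h2.fderiv]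
  simp [fderivInnerCLM_apply, rinner, pd]
  ring

lemma contDiffOn_det {N : WithTop ℕ∞} {M : EuclideanSpace ℝ (Fin m) → Matrix (Fin m) (Fin m) ℝ}
    {O : Set (EuclideanSpace ℝ (Fin m))}
    (h : ∀ i j, ContDiffOn ℝ N (fun t => M t i j) O) :
    ContDiffOn ℝ N (fun t => (M t).det) O := by
  simp only [Matrix.det_apply']
  apply ContDiffOn.sum
  intro σ _
  apply ContDiffOn.mul contDiffOn_const
  have : (fun t => ∏ i, M t (σ i) i) = (∏ i : Fin m, fun t => M t (σ i) i) := by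
    funext t; simp
  rw [this]
  exact contDiffOn_prod' fun i _ => h _ _

open scoped Matrix in
lemma gram_quad (u : EuclideanSpace ℝ (Fin m) → EuclideanSpace ℂ (Fin n))
    (t : EuclideanSpace ℝ (Fin m)) (x : Fin m → ℝ) :
    x ⬝ᵥ (gram u t *ᵥ x) = rinner (∑ i, x i • pd i u t) (∑ j, x j • pd j u t) := by
  rw [rinner_sum_left]
  simp only [rinner_sum_right, rinner_smul_left, rinner_smul_right]
  unfold dotProduct Matrix.mulVec dotProduct
  apply Finset.sum_congr rfl
  intro i _
  rw [Finset.mul_sum]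
  apply Finset.sum_congr rfl
  intro j _
  unfold gram
  ring

open scoped Matrix in
lemma gram_det_pos (u : EuclideanSpace ℝ (Fin m) → EuclideanSpace ℂ (Fin n))
    (t : EuclideanSpace ℝ (Fin m)) (hg : IsUnit (gram u t)) : 0 < (gram u t).det := by
  have herm : (gram u t).IsHermitian := by
    ext i j
    simp only [Matrix.conjTranspose_apply, star_trivial]
    exact rinner_comm _ _
  have hpsd : (gram u t).PosSemidef := by
    refine Matrix.PosSemidef.of_dotProduct_mulVec_nonneg herm fun x => ?_
    rw [star_trivial, gram_quad]
    exact inner_self_nonneg (𝕜 := ℂ) (x := ∑ i, x i • pd i u t)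
  have hdetu : IsUnit (gram u t).det := (Matrix.isUnit_iff_isUnit_det _).1 hg
  have hpd : (gram u t).PosDef := by
    refine Matrix.PosDef.of_dotProduct_mulVec_pos herm fun x hx => ?_
    rcases lt_or_eq_of_le (hpsd.dotProduct_mulVec_nonneg x) with h | h
    · exact h
    · exfalso
      apply hx
      have h0 : (gram u t) *ᵥ x = 0 := (hpsd.dotProduct_mulVec_zero_iff x).1 h.symm
      have := congrArg (fun y => (gram u t)⁻¹ *ᵥ y) h0
      simpa [Matrix.mulVec_mulVec, Matrix.nonsing_inv_mul _ hdetu] using this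
  exact hpd.det_pos

/-- If `u : ℝᵐ → ℂⁿ` is a `C³` immersion on an open set `O` with mean curvature `H = Δ_g u`,
`θ` is a `C¹` primitive of the 1-form `⟨JH, ·⟩`, and the Hamiltonian stationary condition
`Σ_{i,j} g^{ij} ⟨∂_j (JH), ∂_i u⟩ = 0` holds on `O`, then `θ` is harmonic with respect
to the induced metric `g`. -/
theorem harmonicity_of_theta (m n : ℕ) (hm : 1 ≤ m) (hn : 1 ≤ n)
    (O : Set (EuclideanSpace ℝ (Fin m))) (hO : IsOpen O)
    (u : EuclideanSpace ℝ (Fin m) → EuclideanSpace ℂ (Fin n))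
    (hu : ContDiffOn ℝ 3 u O)
    (hg : ∀ t ∈ O, IsUnit (gram u t))
    (s : EuclideanSpace ℝ (Fin m) → ℝ) (hs : ∀ t, s t = Real.sqrt (gram u t).det)
    (ginv : EuclideanSpace ℝ (Fin m) → Matrix (Fin m) (Fin m) ℝ)
    (hginv : ∀ t, ginv t = (gram u t)⁻¹)
    (H : EuclideanSpace ℝ (Fin m) → EuclideanSpace ℂ (Fin n))
    (hH : ∀ t, H t = (s t)⁻¹ •
      ∑ i : Fin m, ∑ j : Fin m, pd j (fun t => (s t * ginv t i j) • pd i u t) t)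
    (θ : EuclideanSpace ℝ (Fin m) → ℝ) (hθ : ContDiffOn ℝ 1 θ O)
    (hdθ : ∀ t ∈ O, ∀ i : Fin m, pd i θ t = rinner (Jc (H t)) (pd i u t))
    (hHS : ∀ t ∈ O,
      (∑ i : Fin m, ∑ j : Fin m,
        ginv t i j * rinner (pd j (fun t => Jc (H t)) t) (pd i u t)) = 0) :
    ∀ t ∈ O,
      (∑ i : Fin m, ∑ j : Fin m, pd j (fun t => s t * ginv t i j * pd i θ t) t) = 0 := by
  -- smoothness facts
  have hdu : ∀ i : Fin m, ContDiffOn ℝ 2 (fun t => pd i u t) O := by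
    intro i
    have h1 := hu.fderiv_of_isOpen hO (le_of_eq (by norm_num) : (2:WithTop ℕ∞)+1 ≤ 3)
    exact h1.clm_apply contDiffOn_const
  have hgrm : ∀ i j : Fin m, ContDiffOn ℝ 2 (fun t => gram u t i j) O := by
    intro i j
    have hfe : (fun t => gram u t i j)
        = ⇑Complex.reCLM ∘ fun t => (inner ℂ (pd i u t) (pd j u t) : ℂ) := rfl
    rw [hfe]
    exact Complex.reCLM.contDiff.comp_contDiffOn (ContDiffOn.inner ℂ (hdu i) (hdu j))
  have hdet : ContDiffOn ℝ 2 (fun t => (gram u t).det) O := contDiffOn_det hgrm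
  have hdet0 : ∀ x ∈ O, (gram u x).det ≠ 0 :=
    fun x hx => ne_of_gt (gram_det_pos u x (hg x hx))
  have hsO : ContDiffOn ℝ 2 s O := by
    intro x hx
    have h1 : ContDiffAt ℝ 2 (fun t => (gram u t).det) x :=
      (hdet x hx).contDiffAt (hO.mem_nhds hx)
    have h2 := (Real.contDiffAt_sqrt (hdet0 x hx)).comp x h1
    have hfe : s = fun t => Real.sqrt (gram u t).det := funext hs
    rw [hfe]
    exact h2.contDiffWithinAt
  have hadj : ∀ i j : Fin m, ContDiffOn ℝ 2 (fun t => (gram u t).adjugate i j) O := by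
    intro i j
    simp only [Matrix.adjugate_apply]
    apply contDiffOn_det
    intro a b
    simp only [Matrix.updateRow_apply]
    by_cases hab : a = j
    · simp only [hab, if_pos rfl]
      exact contDiffOn_const
    · simp only [if_neg hab]
      exact hgrm a b
  have hginvO : ∀ i j : Fin m, ContDiffOn ℝ 2 (fun t => ginv t i j) O := by
    intro i j
    have hfe : (fun t => ginv t i j)
        = fun t => ((gram u t).det)⁻¹ * (gram u t).adjugate i j := by
      funext x
      rw [hginv, Matrix.inv_def, Matrix.smul_apply, Ring.inverse_eq_inv', smul_eq_mul]
    rw [hfe]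
    exact (hdet.inv hdet0).mul (hadj i j)
  have hcduO : ∀ i j : Fin m,
      ContDiffOn ℝ 2 (fun t => (s t * ginv t i j) • pd i u t) O :=
    fun i j => (hsO.mul (hginvO i j)).smul (hdu i)
  have hpdO : ∀ i j : Fin m,
      ContDiffOn ℝ 1 (fun x => pd j (fun t => (s t * ginv t i j) • pd i u t) x) O := by
    intro i j
    have h1 := (hcduO i j).fderiv_of_isOpen hO (le_of_eq (by norm_num) : (1:WithTop ℕ∞)+1 ≤ 2)
    exact h1.clm_apply contDiffOn_const
  have hFO : ContDiffOn ℝ 1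
      (fun x => ∑ i : Fin m, ∑ j : Fin m,
        pd j (fun t => (s t * ginv t i j) • pd i u t) x) O :=
    ContDiffOn.sum fun i _ => ContDiffOn.sum fun j _ => hpdO i j
  have hs0 : ∀ x ∈ O, s x ≠ 0 := by
    intro x hx
    rw [hs]
    exact ne_of_gt (Real.sqrt_pos.2 (gram_det_pos u x (hg x hx)))
  have hHO : ContDiffOn ℝ 1 H O := by
    have hfe : H = fun x => (s x)⁻¹ • ∑ i : Fin m, ∑ j : Fin m,
        pd j (fun t => (s t * ginv t i j) • pd i u t) x := funext hH
    rw [hfe]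
    exact ((hsO.of_le (by norm_num)).inv hs0).smul hFO
  have hJH : ContDiffOn ℝ 1 (fun x => Jc (H x)) O := by
    have hfe : (fun x => Jc (H x)) = fun x => Complex.I • H x := rfl
    rw [hfe]
    exact hHO.const_smul Complex.I
  -- main computation
  intro t ht
  have hdJH : DifferentiableAt ℝ (fun x => Jc (H x)) t :=
    (hJH.differentiableOn one_ne_zero).differentiableAt (hO.mem_nhds ht)
  have hdcdu : ∀ i j : Fin m,
      DifferentiableAt ℝ (fun x => (s x * ginv x i j) • pd i u x) t :=
    fun i j => (((hcduO i j).of_le (by norm_num : (1:WithTop ℕ∞) ≤ 2)).differentiableOn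
      one_ne_zero).differentiableAt (hO.mem_nhds ht)
  have key : ∀ i j : Fin m, pd j (fun x => s x * ginv x i j * pd i θ x) t
      = rinner (pd j (fun x => Jc (H x)) t) ((s t * ginv t i j) • pd i u t)
        + rinner (Jc (H t)) (pd j (fun x => (s x * ginv x i j) • pd i u x) t) := by
    intro i j
    have hev : (fun x => s x * ginv x i j * pd i θ x)
        =ᶠ[nhds t] (fun x => rinner (Jc (H x)) ((s x * ginv x i j) • pd i u x)) := by
      filter_upwards [hO.mem_nhds ht] with x hx
      rw [hdθ x hx i, rinner_smul_right]
    rw [pd_congr_nhds j hev, pd_rinner j hdJH (hdcdu i j)]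
  simp only [key]
  rw [Finset.sum_congr rfl (fun i _ => Finset.sum_add_distrib), Finset.sum_add_distrib]
  have part1 : (∑ i : Fin m, ∑ j : Fin m,
      rinner (pd j (fun x => Jc (H x)) t) ((s t * ginv t i j) • pd i u t)) = 0 := by
    have : ∀ i j : Fin m,
        rinner (pd j (fun x => Jc (H x)) t) ((s t * ginv t i j) • pd i u t)
        = s t * (ginv t i j * rinner (pd j (fun x => Jc (H x)) t) (pd i u t)) := by
      intro i j
      rw [rinner_smul_right]
      ring
    simp only [this, ← Finset.mul_sum]
    rw [hHS t ht, mul_zero]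
  have part2 : (∑ i : Fin m, ∑ j : Fin m,
      rinner (Jc (H t)) (pd j (fun x => (s x * ginv x i j) • pd i u x) t)) = 0 := by
    have hsum : (∑ i : Fin m, ∑ j : Fin m,
        rinner (Jc (H t)) (pd j (fun x => (s x * ginv x i j) • pd i u x) t))
        = rinner (Jc (H t)) (∑ i : Fin m, ∑ j : Fin m,
            pd j (fun x => (s x * ginv x i j) • pd i u x) t) := by
      rw [rinner_sum_right]
      exact Finset.sum_congr rfl fun i _ => (rinner_sum_right _ _ _).symm
    rw [hsum]
    have hF : (∑ i : Fin m, ∑ j : Fin m,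
        pd j (fun x => (s x * ginv x i j) • pd i u x) t) = s t • H t := by
      rw [hH t, smul_inv_smul₀ (hs0 t ht)]
    rw [hF, rinner_smul_right, rinner_J_self, mul_zero]
  rw [part1, part2, add_zero]
end

section
/- Let n ≥ 1 and let u : ℂ → ℂⁿ be twice continuously differentiable on all of ℂ (regarding ℂ ≅ ℝ², with ∂₁, ∂₂ the partial derivatives in the real and imaginary coordinate directions). Assume u is doubly periodic: there are ℝ-linearly independent ω₁, ω₂ ∈ ℂ with u(w + ω₁) = u(w) and u(w + ω₂) = u(w) for all w ∈ ℂ. Assume also on all of ℂ: isotropy ⟨J ∂₁u, ∂₂u⟩ = 0 and Hamiltonian stationarity ⟨J u, ∂₁∂₁u + ∂₂∂₂u⟩ = 0. Then either ⟨J u, ∂₁u⟩ and ⟨J u, ∂₂u⟩ vanish identically on ℂ, or there is no point w ∈ ℂ at which ⟨J u(w), ∂₁u(w)⟩ = 0 and ⟨J u(w), ∂₂u(w)⟩ = 0 simultaneously. -/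
/-- Partial derivative in the real coordinate direction for a map on `ℂ ≅ ℝ²`. -/
noncomputable def pd1 {E : Type*} [NormedAddCommGroup E] [NormedSpace ℝ E]
    (f : ℂ → E) (w : ℂ) : E :=
  fderiv ℝ f w 1

/-- Partial derivative in the imaginary coordinate direction for a map on `ℂ ≅ ℝ²`. -/
noncomputable def pd2 {E : Type*} [NormedAddCommGroup E] [NormedSpace ℝ E]
    (f : ℂ → E) (w : ℂ) : E :=
  fderiv ℝ f w Complex.I

section Aux

open Complex ContinuousLinearMap

variable {n : ℕ}
local notation "En" => EuclideanSpace ℂ (Fin n)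

lemma rinner_Jc_eq_im (x y : En) :
    rinner (Jc x) y = (inner ℂ x y : ℂ).im := by
  simp [rinner, Jc, inner_smul_left]

/-- The auxiliary function `α - iβ`. -/
noncomputable def ff (u : ℂ → En) (w : ℂ) : ℂ :=
  ((inner ℂ (u w) (pd1 u w) : ℂ).im : ℂ) - (inner ℂ (u w) (pd2 u w) : ℂ).im • Complex.I

set_option maxHeartbeats 1000000 in
lemma ff_entire (u : ℂ → En) (hu : ContDiff ℝ 2 u)
    (hiso : ∀ w : ℂ, rinner (Jc (pd1 u w)) (pd2 u w) = 0)
    (hHS : ∀ w : ℂ, rinner (Jc (u w)) (pd1 (pd1 u) w + pd2 (pd2 u) w) = 0) :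
    Differentiable ℂ (ff u) := by
  intro w
  have hu1 : Differentiable ℝ u := hu.differentiable two_ne_zero
  have hD : Differentiable ℝ (fderiv ℝ u) :=
    (hu.fderiv_right (m := 1) (by norm_num)).differentiable one_ne_zero
  set Du : ℂ →L[ℝ] En := fderiv ℝ u w with hDu
  set D2 : ℂ →L[ℝ] ℂ →L[ℝ] En := fderiv ℝ (fderiv ℝ u) w with hD2
  have hpd : ∀ v₀ : ℂ, HasFDerivAt (fun x => fderiv ℝ u x v₀)
      ((ContinuousLinearMap.apply ℝ En v₀).comp D2) w := fun v₀ =>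
    (ContinuousLinearMap.apply ℝ En v₀).hasFDerivAt.comp w (hD w).hasFDerivAt
  have hsymm : D2 Complex.I 1 = D2 1 Complex.I :=
    (hu.contDiffAt.isSymmSndFDerivAt (by simp [minSmoothness_of_isRCLikeNormedField])) Complex.I 1
  -- derivatives of the two complex inner products
  set L₁ : ℂ →L[ℝ] ℂ := (fderivInnerCLM ℂ (u w, pd1 u w)).comp
      (Du.prod ((ContinuousLinearMap.apply ℝ En 1).comp D2)) with hL₁
  set L₂ : ℂ →L[ℝ] ℂ := (fderivInnerCLM ℂ (u w, pd2 u w)).comp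
      (Du.prod ((ContinuousLinearMap.apply ℝ En Complex.I).comp D2)) with hL₂
  have hF : HasFDerivAt (fun x => (inner ℂ (u x) (pd1 u x) : ℂ)) L₁ w :=
    HasFDerivAt.inner ℂ (hu1 w).hasFDerivAt (hpd 1)
  have hG : HasFDerivAt (fun x => (inner ℂ (u x) (pd2 u x) : ℂ)) L₂ w :=
    HasFDerivAt.inner ℂ (hu1 w).hasFDerivAt (hpd Complex.I)
  set Lf : ℂ →L[ℝ] ℂ :=
    ((Complex.ofRealCLM.comp Complex.imCLM).comp L₁) -
      ((Complex.imCLM.comp L₂).smulRight Complex.I) with hLf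
  have hff : HasFDerivAt (ff u) Lf w := by
    have h1 : HasFDerivAt (fun x => (((inner ℂ (u x) (pd1 u x) : ℂ)).im : ℂ))
        ((Complex.ofRealCLM.comp Complex.imCLM).comp L₁) w :=
      (Complex.ofRealCLM.comp Complex.imCLM).hasFDerivAt.comp w hF
    have h2 : HasFDerivAt (fun x => ((inner ℂ (u x) (pd2 u x) : ℂ)).im • Complex.I)
        ((Complex.imCLM.comp L₂).smulRight Complex.I) w :=
      HasFDerivAt.smul_const (Complex.imCLM.hasFDerivAt.comp w hG) Complex.I
    exact h1.sub h2
  -- values of L₁, L₂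
  have hL₁v : ∀ v, L₁ v = (inner ℂ (u w) (D2 v 1) : ℂ) + (inner ℂ (Du v) (Du 1) : ℂ) := by
    intro v
    simp [hL₁, fderivInnerCLM_apply, pd1, ← hDu]
  have hL₂v : ∀ v, L₂ v = (inner ℂ (u w) (D2 v Complex.I) : ℂ) +
      (inner ℂ (Du v) (Du Complex.I) : ℂ) := by
    intro v
    simp [hL₂, fderivInnerCLM_apply, pd2, ← hDu]
  -- vanishing facts
  have h1 : (inner ℂ (Du 1) (Du Complex.I) : ℂ).im = 0 := by
    have := hiso w
    rwa [rinner_Jc_eq_im] at this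
  have h2 : (inner ℂ (Du Complex.I) (Du 1) : ℂ).im = 0 := by
    have hc := congrArg Complex.im (inner_conj_symm (Du 1) (Du Complex.I))
    simp only [Complex.conj_im] at hc
    linarith
  have him_self : ∀ x : En, (inner ℂ x x : ℂ).im = 0 := by
    intro x
    have hc := congrArg Complex.im (inner_conj_symm x x)
    simp only [Complex.conj_im] at hc
    linarith
  have h3 : (inner ℂ (Du 1) (Du 1) : ℂ).im = 0 := him_self _
  have h4 : (inner ℂ (Du Complex.I) (Du Complex.I) : ℂ).im = 0 := him_self _
  have h6 : (inner ℂ (u w) (D2 1 1) : ℂ).im + (inner ℂ (u w) (D2 Complex.I Complex.I) : ℂ).im = 0 := by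
    have hHSw := hHS w
    rw [rinner_Jc_eq_im] at hHSw
    have e1 : pd1 (pd1 u) w = D2 1 1 := by
      have h := (hpd 1).fderiv
      calc pd1 (pd1 u) w = fderiv ℝ (fun x => fderiv ℝ u x 1) w 1 := rfl
        _ = ((ContinuousLinearMap.apply ℝ En 1).comp D2) 1 := by rw [h]
        _ = D2 1 1 := rfl
    have e2 : pd2 (pd2 u) w = D2 Complex.I Complex.I := by
      have h := (hpd Complex.I).fderiv
      calc pd2 (pd2 u) w = fderiv ℝ (fun x => fderiv ℝ u x Complex.I) w Complex.I := rfl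
        _ = ((ContinuousLinearMap.apply ℝ En Complex.I).comp D2) Complex.I := by rw [h]
        _ = D2 Complex.I Complex.I := rfl
    rw [e1, e2, inner_add_right] at hHSw
    simpa using hHSw
  -- values of Lf
  have eLf : ∀ v, Lf v = ((L₁ v).im : ℂ) - ((L₂ v).im : ℂ) * Complex.I := by
    intro v
    simp only [hLf, ContinuousLinearMap.sub_apply, ContinuousLinearMap.comp_apply,
      ContinuousLinearMap.smulRight_apply, Complex.imCLM_apply, Complex.ofRealCLM_apply,
      Complex.real_smul]
  have q1 : (L₁ 1).im = (inner ℂ (u w) (D2 1 1) : ℂ).im := by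
    rw [hL₁v]; rw [Complex.add_im, h3, add_zero]
  have q2 : (L₂ 1).im = (inner ℂ (u w) (D2 1 Complex.I) : ℂ).im := by
    rw [hL₂v]; rw [Complex.add_im, h1, add_zero]
  have q3 : (L₁ Complex.I).im = (inner ℂ (u w) (D2 1 Complex.I) : ℂ).im := by
    have hs : (inner ℂ (u w) (D2 Complex.I 1) : ℂ).im = (inner ℂ (u w) (D2 1 Complex.I) : ℂ).im := by
      rw [hsymm]
    rw [hL₁v, Complex.add_im, h2, add_zero]
    exact hs
  have q4 : (L₂ Complex.I).im = (inner ℂ (u w) (D2 Complex.I Complex.I) : ℂ).im := by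
    rw [hL₂v]; rw [Complex.add_im, h4, add_zero]
  -- Cauchy-Riemann
  have hCR : Lf Complex.I = Complex.I * Lf 1 := by
    rw [eLf, eLf, q1, q2, q3, q4]
    have hC : (inner ℂ (u w) (D2 Complex.I Complex.I) : ℂ).im
        = -(inner ℂ (u w) (D2 1 1) : ℂ).im := by linarith
    rw [hC]
    push_cast
    ring_nf
    rw [Complex.I_sq]
    ring
  -- the real derivative is complex linear
  have key : ∀ v : ℂ, Lf v = v * Lf 1 := by
    intro v
    have hv := Complex.re_add_im v
    calc Lf v = Lf (v.re • (1:ℂ) + v.im • Complex.I) := by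
          rw [show (v.re:ℝ) • (1:ℂ) + (v.im:ℝ) • Complex.I = v by
            rw [Complex.real_smul, Complex.real_smul, mul_one, hv]]
      _ = v.re • Lf 1 + v.im • Lf Complex.I := by rw [map_add, map_smul, map_smul]
      _ = v * Lf 1 := by
          rw [hCR, Complex.real_smul, Complex.real_smul]
          conv_rhs => rw [← hv]
          ring
  have hcx : HasFDerivAt (ff u) ((1 : ℂ →L[ℂ] ℂ).smulRight (Lf 1)) w := by
    apply hasFDerivAt_of_restrictScalars ℝ hff
    ext v
    simp [key v]
  exact hcx.differentiableAt

lemma fderiv_per {E : Type*} [NormedAddCommGroup E] [NormedSpace ℝ E]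
    (u : ℂ → E) (hu1 : Differentiable ℝ u) (ω : ℂ) (hper : ∀ w, u (w + ω) = u w) (w : ℂ) :
    fderiv ℝ u (w + ω) = fderiv ℝ u w := by
  have heq : (fun x => u (x + ω)) = u := funext hper
  have h : HasFDerivAt (fun x => u (x + ω))
      ((fderiv ℝ u (w + ω)).comp (ContinuousLinearMap.id ℝ ℂ)) w :=
    (hu1 (w + ω)).hasFDerivAt.comp w ((hasFDerivAt_id w).add_const ω)
  rw [ContinuousLinearMap.comp_id, heq] at h
  exact h.fderiv.symm

lemma ff_per (u : ℂ → En) (hu1 : Differentiable ℝ u) (ω : ℂ)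
    (hper : ∀ w, u (w + ω) = u w) : Function.Periodic (ff u) ω := by
  intro w
  have h := fderiv_per u hu1 ω hper w
  simp only [ff, pd1, pd2, h, hper w]

lemma ff_re (u : ℂ → En) (w : ℂ) : (ff u w).re = (inner ℂ (u w) (pd1 u w) : ℂ).im := by
  simp [ff, Complex.real_smul]

lemma ff_im (u : ℂ → En) (w : ℂ) : (ff u w).im = -(inner ℂ (u w) (pd2 u w) : ℂ).im := by
  simp [ff, Complex.real_smul]

lemma ff_const (u : ℂ → En) (hu1 : Differentiable ℝ u) (hd : Differentiable ℂ (ff u))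
    (ω₁ ω₂ : ℂ) (hind : LinearIndependent ℝ ![ω₁, ω₂])
    (hper₁ : ∀ w : ℂ, u (w + ω₁) = u w) (hper₂ : ∀ w : ℂ, u (w + ω₂) = u w)
    (z : ℂ) : ff u z = ff u 0 := by
  have hp1 : Function.Periodic (ff u) ω₁ := ff_per u hu1 ω₁ hper₁
  have hp2 : Function.Periodic (ff u) ω₂ := ff_per u hu1 ω₂ hper₂
  have hcont : Continuous (ff u) := hd.continuous
  set K : Set ℂ := (fun p : ℝ × ℝ => p.1 • ω₁ + p.2 • ω₂) ''
    (Set.Icc (0:ℝ) 1 ×ˢ Set.Icc (0:ℝ) 1) with hKdef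
  have hK : IsCompact K := (isCompact_Icc.prod isCompact_Icc).image (by fun_prop)
  have hrange : Set.range (ff u) ⊆ ff u '' K := by
    rintro _ ⟨z, rfl⟩
    have hcard : Fintype.card (Fin 2) = Module.finrank ℝ ℂ := by
      simp [Complex.finrank_real_complex]
    set b := basisOfLinearIndependentOfCardEqFinrank hind hcard with hb
    have hb0 : b 0 = ω₁ := by rw [hb, coe_basisOfLinearIndependentOfCardEqFinrank]; rfl
    have hb1 : b 1 = ω₂ := by rw [hb, coe_basisOfLinearIndependentOfCardEqFinrank]; rfl
    set a : ℝ := b.repr z 0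
    set c : ℝ := b.repr z 1
    have hz : a • ω₁ + c • ω₂ = z := by
      have := b.sum_repr z
      rwa [Fin.sum_univ_two, hb0, hb1] at this
    set z' : ℂ := Int.fract a • ω₁ + Int.fract c • ω₂ with hz'
    have hmem : z' ∈ K := by
      refine ⟨(Int.fract a, Int.fract c), ⟨⟨Int.fract_nonneg a, (Int.fract_lt_one a).le⟩,
        ⟨Int.fract_nonneg c, (Int.fract_lt_one c).le⟩⟩, rfl⟩
    refine ⟨z', hmem, ?_⟩
    have he : z = (z' + (⌊c⌋ : ℂ) * ω₂) + (⌊a⌋ : ℂ) * ω₁ := by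
      rw [← hz, hz']
      simp only [Complex.real_smul, Int.fract]
      push_cast
      ring
    rw [he, (hp1.int_mul ⌊a⌋) (z' + (⌊c⌋ : ℂ) * ω₂), (hp2.int_mul ⌊c⌋) z']
  have hbd : Bornology.IsBounded (Set.range (ff u)) :=
    ((hK.image hcont).isBounded).subset hrange
  exact hd.apply_eq_apply_of_bounded hbd z 0

end Aux

/-- A doubly periodic `C²` isotropic map `u : ℂ → ℂⁿ` whose cone is Hamiltonian stationary
is either everywhere Legendrian or has no Legendrian points at all (the genus-one case:
`2g - 2 = 0` Legendrian points). -/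
theorem torus_dichotomy (n : ℕ) (hn : 1 ≤ n)
    (u : ℂ → EuclideanSpace ℂ (Fin n))
    (hu : ContDiff ℝ 2 u)
    (ω₁ ω₂ : ℂ) (hind : LinearIndependent ℝ ![ω₁, ω₂])
    (hper₁ : ∀ w : ℂ, u (w + ω₁) = u w)
    (hper₂ : ∀ w : ℂ, u (w + ω₂) = u w)
    (hiso : ∀ w : ℂ, rinner (Jc (pd1 u w)) (pd2 u w) = 0)
    (hHS : ∀ w : ℂ, rinner (Jc (u w)) (pd1 (pd1 u) w + pd2 (pd2 u) w) = 0) :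
    (∀ w : ℂ, rinner (Jc (u w)) (pd1 u w) = 0 ∧ rinner (Jc (u w)) (pd2 u w) = 0)
    ∨ (∀ w : ℂ, ¬(rinner (Jc (u w)) (pd1 u w) = 0 ∧ rinner (Jc (u w)) (pd2 u w) = 0)) := by
  have hu1 : Differentiable ℝ u := hu.differentiable two_ne_zero
  have hd : Differentiable ℂ (ff u) := ff_entire u hu hiso hHS
  have hconst : ∀ z, ff u z = ff u 0 := ff_const u hu1 hd ω₁ ω₂ hind hper₁ hper₂
  have hre : ∀ w, rinner (Jc (u w)) (pd1 u w) = (ff u w).re := fun w => by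
    rw [rinner_Jc_eq_im, ff_re]
  have him : ∀ w, rinner (Jc (u w)) (pd2 u w) = -(ff u w).im := fun w => by
    rw [rinner_Jc_eq_im, ff_im]; ring
  by_cases h0 : ff u 0 = 0
  · left
    intro w
    have h := hconst w
    rw [h0] at h
    constructor
    · rw [hre, h]; simp
    · rw [him, h]; simp
  · right
    rintro w ⟨ha, hb⟩
    apply h0
    rw [← hconst w]
    rw [hre w] at ha
    rw [him w] at hb
    apply Complex.ext
    · simpa using ha
    · simpa using hb
end
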